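/- Let $K$ be a field and $R=K[x_1,\dots,x_t,y_1,\dots,y_t]$. Then there exist $t$ elements $\gamma_1,\dots,\gamma_t\in R$ such that $\sqrt{(\gamma_1,\dots,\gamma_t)}=\sqrt{\bigcap_{i=0}^{t}(y_1,\dots,y_i,x_{i+1},\dots,x_t)}$. -/

import Mathlib

open MvPolynomial

namespace Stmt12Aux

variable (K : Type*) [Field K] (t : ℕ)

/-- The diagonal sums `γ d = ∑_k x_{k+d} y_k`. -/
noncomputable def γ : Fin t → MvPolynomial (Fin t ⊕ Fin t) K :=
  fun d => ∑ k : Fin t, if h : (k : ℕ) + (d : ℕ) < t then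
    X (Sum.inl (⟨(k : ℕ) + (d : ℕ), h⟩ : Fin t)) * X (Sum.inr k) else 0

/-- The set of products `x_j y_k`, `k ≤ j`. -/
def T : Set (MvPolynomial (Fin t ⊕ Fin t) K) :=
  {p | ∃ j k : Fin t, (k : ℕ) ≤ (j : ℕ) ∧ p = X (Sum.inl j) * X (Sum.inr k)}

/-- The generating set of the `i`-th prime. -/
def U (i : ℕ) : Set (MvPolynomial (Fin t ⊕ Fin t) K) :=
  (fun j : Fin t => X (Sum.inr j)) '' {j | (j : ℕ) < i} ∪
    (fun j : Fin t => X (Sum.inl j)) '' {j | i ≤ (j : ℕ)}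

/-- Schmitt–Vogel style induction: each product `x_j y_k` with `k + d = j` lies in the
radical of the ideal generated by the diagonal sums. -/
lemma key (n : ℕ) : ∀ d : ℕ, t ≤ d + n → ∀ j k : Fin t, (k : ℕ) + d = (j : ℕ) →
    X (Sum.inl j) * X (Sum.inr k) ∈ (Ideal.span (Set.range (γ K t))).radical := by
  induction n with
  | zero =>
    intro d hd j k hk
    have := j.isLt
    omega
  | succ n ih =>
    intro d hd j k hk
    have hjt := j.isLt
    have hkt := k.isLt
    have hdt : d < t := by omega
    set Rad := (Ideal.span (Set.range (γ K t))).radical with hRad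
    have hγ : γ K t ⟨d, hdt⟩ ∈ Rad :=
      Ideal.le_radical (Ideal.subset_span ⟨⟨d, hdt⟩, rfl⟩)
    set a := X (R := K) (Sum.inl j) * X (Sum.inr k) with ha
    have hmul : a * γ K t ⟨d, hdt⟩ ∈ Rad := Ideal.mul_mem_left _ _ hγ
    set f : Fin t → MvPolynomial (Fin t ⊕ Fin t) K := fun k' =>
      if h : (k' : ℕ) + d < t then
        X (Sum.inl (⟨(k' : ℕ) + d, h⟩ : Fin t)) * X (Sum.inr k') else 0 with hf
    have hγd : γ K t ⟨d, hdt⟩ = ∑ k' : Fin t, f k' := rfl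
    have hfk : f k = a := by
      have hlt : (k : ℕ) + d < t := by omega
      have hj : (⟨(k : ℕ) + d, hlt⟩ : Fin t) = j := Fin.ext hk
      rw [hf]
      simp only [dif_pos hlt, hj]
      exact ha.symm
    have hexp : a * γ K t ⟨d, hdt⟩
        = a * a + ∑ k' ∈ Finset.univ.erase k, a * f k' := by
      rw [hγd, Finset.mul_sum, ← Finset.add_sum_erase _ _ (Finset.mem_univ k), hfk]
    have hrest : ∑ k' ∈ Finset.univ.erase k, a * f k' ∈ Rad := by
      refine Ideal.sum_mem _ (fun k' hk' => ?_)
      have hk'ne : (k' : ℕ) ≠ (k : ℕ) := by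
        intro h
        exact (Finset.mem_erase.mp hk').1 (Fin.ext h)
      by_cases h : (k' : ℕ) + d < t
      · rw [hf]
        simp only [dif_pos h]
        rcases lt_or_gt_of_ne hk'ne with hlt | hgt
        · -- k' < k : use x_j y_{k'} (diagonal d + (k - k'))
          have hmem : X (R := K) (Sum.inl j) * X (Sum.inr k') ∈ Rad :=
            ih (d + ((k : ℕ) - (k' : ℕ))) (by omega) j k' (by omega)
          have : a * (X (R := K) (Sum.inl (⟨(k' : ℕ) + d, h⟩ : Fin t)) * X (Sum.inr k'))
              = (X (Sum.inl (⟨(k' : ℕ) + d, h⟩ : Fin t)) * X (Sum.inr k)) *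
                (X (Sum.inl j) * X (Sum.inr k')) := by rw [ha]; ring
          rw [this]
          exact Ideal.mul_mem_left _ _ hmem
        · -- k < k' : use x_{k'+d} y_k (diagonal d + (k' - k))
          have hmem : X (R := K) (Sum.inl (⟨(k' : ℕ) + d, h⟩ : Fin t)) * X (Sum.inr k) ∈ Rad :=
            ih (d + ((k' : ℕ) - (k : ℕ))) (by omega) ⟨(k' : ℕ) + d, h⟩ k (by simp; omega)
          have : a * (X (R := K) (Sum.inl (⟨(k' : ℕ) + d, h⟩ : Fin t)) * X (Sum.inr k'))
              = (X (Sum.inl j) * X (Sum.inr k')) *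
                (X (Sum.inl (⟨(k' : ℕ) + d, h⟩ : Fin t)) * X (Sum.inr k)) := by rw [ha]; ring
          rw [this]
          exact Ideal.mul_mem_left _ _ hmem
      · rw [hf]
        simp only [dif_neg h, mul_zero]
        exact Ideal.zero_mem _
    have hsq : a * a ∈ Rad := by
      have : a * a = a * γ K t ⟨d, hdt⟩ - ∑ k' ∈ Finset.univ.erase k, a * f k' := by
        rw [hexp]; ring
      rw [this]
      exact Ideal.sub_mem _ hmul hrest
    have : a ^ 2 ∈ Rad := by rwa [pow_two]
    exact Ideal.mem_radical_of_pow_mem (m := 2) this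

end Stmt12Aux

open Stmt12Aux in
/-- In `R = K[x₁,…,x_t,y₁,…,y_t]` (realized as the polynomial ring on `Fin t ⊕ Fin t`,
`x_j = X (inl j)`, `y_j = X (inr j)`), there exist `t` elements `γ₁,…,γ_t` with
`√(γ₁,…,γ_t) = √(⋂_{i=0}^{t} (y₁,…,y_i,x_{i+1},…,x_t))`. -/
theorem stmt_12 (K : Type*) [Field K] (t : ℕ) :
    ∃ γ : Fin t → MvPolynomial (Fin t ⊕ Fin t) K,
      (Ideal.span (Set.range γ)).radical =
        (⨅ i ∈ Finset.Iic t,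
          Ideal.span ((fun j : Fin t => X (Sum.inr j)) '' {j | (j : ℕ) < i} ∪
            (fun j : Fin t => X (Sum.inl j)) '' {j | i ≤ (j : ℕ)})).radical := by
  classical
  refine ⟨γ K t, ?_⟩
  show (Ideal.span (Set.range (γ K t))).radical
      = (⨅ i ∈ Finset.Iic t, Ideal.span (U K t i)).radical
  -- A : every γ d lies in the ideal generated by the products
  have hA : ∀ d : Fin t, γ K t d ∈ Ideal.span (T K t) := by
    intro d
    refine Ideal.sum_mem _ (fun k _ => ?_)
    by_cases h : (k : ℕ) + (d : ℕ) < t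
    · rw [dif_pos h]
      exact Ideal.subset_span ⟨⟨(k : ℕ) + (d : ℕ), h⟩, k, by simp, rfl⟩
    · rw [dif_neg h]; exact Ideal.zero_mem _
  -- B : the products lie in each prime
  have hB : ∀ i : ℕ, Ideal.span (T K t) ≤ Ideal.span (U K t i) := by
    intro i
    refine Ideal.span_le.mpr ?_
    rintro p ⟨j, k, hkj, rfl⟩
    by_cases h : i ≤ (j : ℕ)
    · exact Ideal.mul_mem_right _ _ (Ideal.subset_span (Or.inr ⟨j, h, rfl⟩))
    · refine Ideal.mul_mem_left _ _ (Ideal.subset_span (Or.inl ⟨k, ?_, rfl⟩))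
      show (k : ℕ) < i
      omega
  -- C2 : every product lies in the radical of (γ)
  have hC2 : Ideal.span (T K t) ≤ (Ideal.span (Set.range (γ K t))).radical := by
    refine Ideal.span_le.mpr ?_
    rintro p ⟨j, k, hkj, rfl⟩
    exact key K t t ((j : ℕ) - (k : ℕ)) (by omega) j k (by omega)
  -- C1 : the intersection is contained in the radical of the product ideal
  have hC1 : (⨅ i ∈ Finset.Iic t, Ideal.span (U K t i)) ≤ (Ideal.span (T K t)).radical := by
    intro p hp
    simp only [Ideal.mem_iInf] at hp
    have h1 : p ^ (t + 1) ∈ ∏ i ∈ Finset.Iic t, Ideal.span (U K t i) := by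
      have : p ^ (t + 1) = ∏ _i ∈ Finset.Iic t, p := by
        rw [Finset.prod_const, Nat.card_Iic]
      rw [this]
      exact Ideal.prod_mem_prod (fun i hi => hp i hi)
    have h2 : (∏ i ∈ Finset.Iic t, Ideal.span (U K t i)) ≤ Ideal.span (T K t) := by
      rw [Ideal.prod_span]
      refine Ideal.span_le.mpr ?_
      intro q hq
      obtain ⟨g, hg, hgq⟩ := (Set.mem_finset_prod _ _ _).mp hq
      -- find the largest index whose generator is an x-variable
      set S : Finset ℕ := (Finset.Iic t).filter
        (fun i => ∃ j : Fin t, i ≤ (j : ℕ) ∧ g i = X (Sum.inl j)) with hS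
      have h0 : 0 ∈ S := by
        have := hg (Finset.mem_Iic.mpr (Nat.zero_le t))
        rcases this with ⟨j, hj, _⟩ | ⟨j, _, hgj⟩
        · exact absurd hj (by simp)
        · exact Finset.mem_filter.mpr ⟨Finset.mem_Iic.mpr (Nat.zero_le t),
            j, Nat.zero_le _, hgj.symm⟩
      set i₀ := S.max' ⟨0, h0⟩ with hi₀def
      have hi₀S := S.max'_mem ⟨0, h0⟩
      obtain ⟨hi₀t, j, hij, hgi₀⟩ := Finset.mem_filter.mp hi₀S
      have hi₀t' : i₀ ≤ t := Finset.mem_Iic.mp hi₀t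
      have hjt := j.isLt
      have hi₁t : i₀ + 1 ≤ t := by omega
      have hnot : i₀ + 1 ∉ S := fun hmem => by
        have := S.le_max' _ hmem
        omega
      have hgmem := hg (Finset.mem_Iic.mpr hi₁t)
      rcases hgmem with ⟨k, hk, hgk⟩ | ⟨j', hj', hgj'⟩
      · -- g (i₀+1) = y_k with k < i₀+1 ≤ j+1, hence k ≤ j
        replace hgk : g (i₀ + 1) = X (Sum.inr k) := hgk.symm
        have hkj : (k : ℕ) ≤ (j : ℕ) := by
          have : (k : ℕ) < i₀ + 1 := hk
          omega
        have hmem1 : i₀ ∈ Finset.Iic t := Finset.mem_Iic.mpr hi₀t'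
        have hmem2 : i₀ + 1 ∈ (Finset.Iic t).erase i₀ :=
          Finset.mem_erase.mpr ⟨by omega, Finset.mem_Iic.mpr hi₁t⟩
        have e1 : ∏ i ∈ Finset.Iic t, g i = g i₀ * ∏ i ∈ (Finset.Iic t).erase i₀, g i :=
          (Finset.mul_prod_erase _ _ hmem1).symm
        have e2 : ∏ i ∈ (Finset.Iic t).erase i₀, g i
            = g (i₀ + 1) * ∏ i ∈ ((Finset.Iic t).erase i₀).erase (i₀ + 1), g i :=
          (Finset.mul_prod_erase _ _ hmem2).symm
        rw [← hgq, e1, e2, hgi₀, hgk, ← mul_assoc]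
        exact Ideal.mul_mem_right _ _ (Ideal.subset_span ⟨j, k, hkj, rfl⟩)
      · -- impossible: i₀+1 would be in S
        exact absurd (Finset.mem_filter.mpr ⟨Finset.mem_Iic.mpr hi₁t, j', hj', hgj'.symm⟩) hnot
    exact ⟨t + 1, h2 h1⟩
  refine le_antisymm ?_ ?_
  · refine Ideal.radical_mono ?_
    refine Ideal.span_le.mpr ?_
    rintro p ⟨d, rfl⟩
    have : Ideal.span (T K t) ≤ ⨅ i ∈ Finset.Iic t, Ideal.span (U K t i) :=
      le_iInf fun i => le_iInf fun _ => hB i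
    exact this (hA d)
  · have h : (⨅ i ∈ Finset.Iic t, Ideal.span (U K t i))
        ≤ (Ideal.span (Set.range (γ K t))).radical := by
      intro p hp
      have h1 := hC1 hp
      have h2 : (Ideal.span (T K t)).radical
          ≤ ((Ideal.span (Set.range (γ K t))).radical).radical := Ideal.radical_mono hC2
      rw [Ideal.radical_idem] at h2
      exact h2 h1
    calc (⨅ i ∈ Finset.Iic t, Ideal.span (U K t i)).radical
        ≤ ((Ideal.span (Set.range (γ K t))).radical).radical := Ideal.radical_mono h
      _ = (Ideal.span (Set.range (γ K t))).radical := Ideal.radical_idem _
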